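/- arXiv:1306.3716 — 5 statements merged into one kernel-verified Lean document; each statement's English description precedes it below -/
import Mathlib

section
/- Let K = 𝔽_q(T) with q = p^t, and let c ∈ K satisfy v_Q(c) ≥ 0 for every place Q of K except possibly the place P associated to a monic irreducible polynomial P(T). Suppose f, g ∈ 𝔽_q[T] are coprime to P, α ∈ ℕ with gcd(α, p) = 1, and g/P^α = j·f/P^α + (c^p − c) for some j ∈ {1,…,p−1}. Then either c = 0, or v_P(c) ≥ −⌊α/p⌋; equivalently c = h(T)/P^{α₀} for some polynomial h with deg h ≤ α₀·deg P, where α₀ = ⌊α/p⌋. -/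
open IsDedekindDomain Polynomial

section Aux
open UniqueFactorizationMonoid

theorem aux_int_one {Fq : Type*} [Field Fq] (Q : HeightOneSpectrum (Polynomial Fq))
    {q r : Polynomial Fq} (hQ : Q.asIdeal = Ideal.span {q}) (hqr : ¬ q ∣ r) :
    Q.intValuation r = 1 := by
  refine le_antisymm (Q.intValuation_le_one r) (not_lt.mp fun hlt => hqr ?_)
  rw [Q.intValuation_lt_one_iff_dvd, Ideal.dvd_iff_le, hQ,
    Ideal.span_singleton_le_span_singleton] at hlt
  exact hlt

theorem aux_int_lt {Fq : Type*} [Field Fq] (Q : HeightOneSpectrum (Polynomial Fq))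
    {q r : Polynomial Fq} (hQ : Q.asIdeal = Ideal.span {q}) (hqr : q ∣ r) :
    Q.intValuation r < 1 := by
  rw [Q.intValuation_lt_one_iff_dvd, Ideal.dvd_iff_le, hQ,
    Ideal.span_singleton_le_span_singleton]
  exact hqr

theorem aux_denom {Fq : Type*} [Field Fq] {P : Polynomial Fq} (hPmonic : P.Monic)
    (v : HeightOneSpectrum (Polynomial Fq)) (hv : v.asIdeal = Ideal.span {P})
    (c : RatFunc Fq)
    (hfin : ∀ Q : HeightOneSpectrum (Polynomial Fq), Q ≠ v → Q.valuation (RatFunc Fq) c ≤ 1) :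
    ∃ m : ℕ, c.denom = P ^ m := by
  classical
  have hd0 : c.denom ≠ 0 := c.denom_ne_zero
  have hkey : ∀ q ∈ normalizedFactors c.denom, q = P := by
    intro q hq
    have hqprime : Prime q := prime_of_normalized_factor q hq
    have hqdvd : q ∣ c.denom := dvd_of_mem_normalizedFactors hq
    have hqmonic : q.Monic := by
      have hnq := normalize_normalized_factor q hq
      rw [← hnq]; exact Polynomial.monic_normalize hqprime.ne_zero
    set Q : HeightOneSpectrum (Polynomial Fq) :=
      ⟨Ideal.span {q}, (Ideal.span_singleton_prime hqprime.ne_zero).mpr hqprime,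
        by simpa using hqprime.ne_zero⟩ with hQdef
    have hQspan : Q.asIdeal = Ideal.span {q} := rfl
    have hQv : Q = v := by
      by_contra hne
      have h1 := hfin Q hne
      have hqn : ¬ q ∣ c.num := fun hdvd =>
        hqprime.not_unit (c.isCoprime_num_denom.isUnit_of_dvd' hdvd hqdvd)
      have hval : Q.valuation (RatFunc Fq) c = Q.intValuation c.num / Q.intValuation c.denom := by
        conv_lhs => rw [← c.num_div_denom]
        rw [map_div₀, HeightOneSpectrum.valuation_of_algebraMap,
          HeightOneSpectrum.valuation_of_algebraMap]
      have hlt : Q.intValuation c.denom < 1 := aux_int_lt Q hQspan hqdvd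
      have hpos : 0 < Q.intValuation c.denom := by
        rw [zero_lt_iff]; exact Q.intValuation_ne_zero _ hd0
      have : 1 < Q.valuation (RatFunc Fq) c := by
        rw [hval, aux_int_one Q hQspan hqn, one_div]
        exact (one_lt_inv₀ hpos).mpr hlt
      exact absurd h1 (not_le.mpr this)
    have hassoc : Associated q P := by
      rw [← Ideal.span_singleton_eq_span_singleton, ← hQspan, hQv, hv]
    exact Polynomial.eq_of_monic_of_associated hqmonic hPmonic hassoc
  refine ⟨Multiset.card (normalizedFactors c.denom), ?_⟩
  have hprod := prod_normalizedFactors hd0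
  rw [Multiset.eq_replicate_card.2 hkey, Multiset.prod_replicate] at hprod
  exact (Polynomial.eq_of_monic_of_associated (hPmonic.pow _) (c.monic_denom) hprod).symm
end Aux

/-- Let `K = 𝔽_q(T)`, `q = p^t`, and let `c ∈ K` satisfy
`v_Q(c) ≥ 0` for every place `Q` of `K` (including the infinite place) except
possibly the place associated to the monic irreducible polynomial `P`.  Suppose
`f, g ∈ 𝔽_q[T]` are coprime to `P`, `α ∈ ℕ` with `p ∤ α`, and
`g / P ^ α = j • (f / P ^ α) + (c ^ p - c)` for some `j ∈ {1, …, p - 1}`.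
Then either `c = 0`, or `v_P(c) ≥ -⌊α / p⌋`; equivalently `c = h / P ^ α₀` for
some polynomial `h` with `deg h ≤ α₀ ⬝ deg P`, where `α₀ = ⌊α / p⌋`.
(Valuations are written multiplicatively: `v_Q(c) ≥ n` additively corresponds
to `Q.valuation (RatFunc Fq) c ≤ ofAdd (-n)` with values in `ℤₘ₀`.) -/
theorem stmt3 {p t : ℕ} (hp : p.Prime) (ht : 0 < t)
    (Fq : Type*) [Field Fq] [Fintype Fq] (hq : Fintype.card Fq = p ^ t)
    (P : Polynomial Fq) (hPmonic : P.Monic) (hPirr : Irreducible P)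
    (v : HeightOneSpectrum (Polynomial Fq)) (hv : v.asIdeal = Ideal.span {P})
    (c : RatFunc Fq)
    (hfin : ∀ Q : HeightOneSpectrum (Polynomial Fq), Q ≠ v → Q.valuation (RatFunc Fq) c ≤ 1)
    (hinf : @FunctionField.inftyValuation Fq _ (Classical.decEq _) c ≤ 1)
    (f g : Polynomial Fq) (hf : IsCoprime f P) (hg : IsCoprime g P)
    (α : ℕ) (hα : ¬ p ∣ α) (j : ℕ) (hj1 : 1 ≤ j) (hj2 : j ≤ p - 1)
    (heq : algebraMap (Polynomial Fq) (RatFunc Fq) g /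
        algebraMap (Polynomial Fq) (RatFunc Fq) (P ^ α) =
      (j : RatFunc Fq) * (algebraMap (Polynomial Fq) (RatFunc Fq) f /
        algebraMap (Polynomial Fq) (RatFunc Fq) (P ^ α)) + (c ^ p - c)) :
    (c = 0 ∨ v.valuation (RatFunc Fq) c ≤
        ((Multiplicative.ofAdd ((α / p : ℕ) : ℤ) : Multiplicative ℤ) :
          WithZero (Multiplicative ℤ))) ∧
      ∃ h : Polynomial Fq, h.degree ≤ (P.natDegree * (α / p) : ℕ) ∧
        c = algebraMap (Polynomial Fq) (RatFunc Fq) h /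
          algebraMap (Polynomial Fq) (RatFunc Fq) (P ^ (α / p)) := by
  classical
  obtain ⟨m, hm⟩ := aux_denom hPmonic v hv c hfin
  have hP0 : P ≠ 0 := hPmonic.ne_zero
  have hPd : 0 < P.natDegree := hPirr.natDegree_pos
  set α₀ := α / p with hα₀
  -- degree of num bounded by degree of denom
  have hdeg : c.num.natDegree ≤ c.denom.natDegree := by
    by_cases hc : c = 0
    · simp [hc]
    · delta FunctionField.inftyValuation at hinf
      rw [RatFunc.inftyValuation_apply, RatFunc.inftyValuationDef,
        if_neg hc, ← WithZero.exp_zero, WithZero.exp_le_exp] at hinf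
      rw [RatFunc.intDegree] at hinf
      omega
  -- valuation of c
  have hPval : v.intValuation P = Multiplicative.ofAdd (-1 : ℤ) :=
    v.intValuation_singleton hP0 hv
  have hPpow : ∀ k : ℕ, v.intValuation (P ^ k) =
      ((Multiplicative.ofAdd (-(k : ℤ)) : Multiplicative ℤ) : WithZero (Multiplicative ℤ)) := by
    intro k
    rw [map_pow, hPval, ← WithZero.coe_pow]
    congr 1
    rw [← ofAdd_nsmul]
    congr 1
    simp [nsmul_eq_mul]
  have hvc : v.valuation (RatFunc Fq) c = v.intValuation c.num *
      ((Multiplicative.ofAdd ((m : ℤ)) : Multiplicative ℤ) : WithZero (Multiplicative ℤ)) := by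
    conv_lhs => rw [← c.num_div_denom]
    rw [map_div₀, HeightOneSpectrum.valuation_of_algebraMap,
      HeightOneSpectrum.valuation_of_algebraMap, hm, hPpow, div_eq_mul_inv,
      ← WithZero.coe_inv, ← ofAdd_neg, neg_neg]
  -- m ≤ α₀
  have hmle : m ≤ α₀ := by
    rcases Nat.eq_zero_or_pos m with hm0 | hm1
    · exact hm0 ▸ Nat.zero_le _
    -- c ≠ 0
    have hc0 : c ≠ 0 := by
      intro h
      rw [h, RatFunc.denom_zero] at hm
      have := congrArg Polynomial.natDegree hm
      rw [Polynomial.natDegree_one, Polynomial.natDegree_pow] at this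
      nlinarith
    have hPn : ¬ P ∣ c.num := by
      intro hdvd
      exact hPirr.not_isUnit (c.isCoprime_num_denom.isUnit_of_dvd' hdvd
        (hm ▸ dvd_pow_self P hm1.ne'))
    have hnum1 : v.intValuation c.num = 1 := aux_int_one v hv hPn
    have hvc' : v.valuation (RatFunc Fq) c =
        ((Multiplicative.ofAdd ((m : ℤ)) : Multiplicative ℤ) : WithZero (Multiplicative ℤ)) := by
      rw [hvc, hnum1, one_mul]
    -- valuation of c^p - c
    have hlt : v.valuation (RatFunc Fq) c < v.valuation (RatFunc Fq) (c ^ p) := by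
      rw [map_pow, hvc', ← WithZero.coe_pow, WithZero.coe_lt_coe, ← ofAdd_nsmul,
        Multiplicative.ofAdd_lt]
      simp only [nsmul_eq_mul]
      exact_mod_cast (lt_mul_iff_one_lt_left hm1).mpr hp.one_lt
    have hsub : v.valuation (RatFunc Fq) (c ^ p - c) =
        ((Multiplicative.ofAdd ((m * p : ℕ) : ℤ) : Multiplicative ℤ) :
          WithZero (Multiplicative ℤ)) := by
      rw [Valuation.map_sub_eq_of_lt_left _ hlt, map_pow, hvc', ← WithZero.coe_pow, ← ofAdd_nsmul]
      congr 2
      simp [nsmul_eq_mul, mul_comm]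
    -- the equation
    have hA : algebraMap (Polynomial Fq) (RatFunc Fq) (P ^ α) ≠ 0 := by
      simpa using pow_ne_zero α hP0
    have heq2 : c ^ p - c = algebraMap (Polynomial Fq) (RatFunc Fq) (g - (j : Polynomial Fq) * f) /
        algebraMap (Polynomial Fq) (RatFunc Fq) (P ^ α) := by
      rw [map_sub, map_mul, map_natCast, sub_div, mul_div_assoc, heq]
      ring
    have hub : v.valuation (RatFunc Fq) (c ^ p - c) ≤
        ((Multiplicative.ofAdd ((α : ℤ)) : Multiplicative ℤ) : WithZero (Multiplicative ℤ)) := by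
      rw [heq2, map_div₀, HeightOneSpectrum.valuation_of_algebraMap,
        HeightOneSpectrum.valuation_of_algebraMap, hPpow, div_eq_mul_inv,
        ← WithZero.coe_inv, ← ofAdd_neg, neg_neg]
      calc v.intValuation (g - (j : Polynomial Fq) * f) *
            ((Multiplicative.ofAdd ((α : ℤ)) : Multiplicative ℤ) : WithZero (Multiplicative ℤ))
          ≤ 1 * ((Multiplicative.ofAdd ((α : ℤ)) : Multiplicative ℤ) :
              WithZero (Multiplicative ℤ)) :=
            mul_le_mul_left (v.intValuation_le_one _) _
        _ = _ := one_mul _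
    rw [hsub, WithZero.coe_le_coe, Multiplicative.ofAdd_le] at hub
    have : m * p ≤ α := by exact_mod_cast hub
    exact Nat.le_div_iff_mul_le hp.pos |>.mpr this
  constructor
  · right
    calc v.valuation (RatFunc Fq) c ≤ 1 *
        ((Multiplicative.ofAdd ((m : ℤ)) : Multiplicative ℤ) : WithZero (Multiplicative ℤ)) := by
          rw [hvc]; exact mul_le_mul_left (v.intValuation_le_one _) _
      _ = ((Multiplicative.ofAdd ((m : ℤ)) : Multiplicative ℤ) :
          WithZero (Multiplicative ℤ)) := one_mul _
      _ ≤ _ := by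
          rw [WithZero.coe_le_coe, Multiplicative.ofAdd_le]
          exact_mod_cast hmle
  · refine ⟨c.num * P ^ (α₀ - m), ?_, ?_⟩
    · by_cases hn0 : c.num = 0
      · simp [hn0]
      · have hh0 : c.num * P ^ (α₀ - m) ≠ 0 := mul_ne_zero hn0 (pow_ne_zero _ hP0)
        have h1 : c.num.natDegree ≤ m * P.natDegree := by
          rw [hm, Polynomial.natDegree_pow] at hdeg
          exact hdeg
        have hnd : (c.num * P ^ (α₀ - m)).natDegree ≤ P.natDegree * α₀ := by
          rw [Polynomial.natDegree_mul hn0 (pow_ne_zero _ hP0), Polynomial.natDegree_pow]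
          calc c.num.natDegree + (α₀ - m) * P.natDegree
              ≤ m * P.natDegree + (α₀ - m) * P.natDegree := Nat.add_le_add_right h1 _
            _ = P.natDegree * α₀ := by
                rw [← Nat.add_mul, Nat.add_sub_cancel' hmle, mul_comm]
        calc (c.num * P ^ (α₀ - m)).degree ≤ ((c.num * P ^ (α₀ - m)).natDegree : WithBot ℕ) :=
              Polynomial.degree_le_natDegree
          _ ≤ ((P.natDegree * α₀ : ℕ) : WithBot ℕ) := by exact_mod_cast hnd
    · have hsplit : P ^ α₀ = P ^ m * P ^ (α₀ - m) := by
        rw [← pow_add, Nat.add_sub_cancel' hmle]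
      rw [hsplit, map_mul, map_mul,
        mul_div_mul_right _ _ (by simpa using pow_ne_zero (α₀ - m) hP0), ← hm,
        c.num_div_denom]
end

section
/- Let q = p^t, P ∈ 𝔽_q[T] a monic irreducible polynomial of degree d, and β ≥ 2. The number of elements of order exactly p in the unit group (𝔽_q[T]/(P^β))^× is q^{(β − ⌈β/p⌉)d} − 1. -/
open Polynomial

lemma aux_card_ne {α : Type*} [Fintype α] (a : α) :
    Nat.card {x : α // x ≠ a} = Nat.card α - 1 := by
  classical
  simp [Nat.card_eq_fintype_card, Fintype.card_subtype_compl, Fintype.card_subtype_eq]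

/-- Let `q = p^t`, `P ∈ 𝔽_q[T]` a monic irreducible polynomial of
degree `d`, and `β ≥ 2`.  The number of elements of order exactly `p` in the unit
group `(𝔽_q[T]/(P^β))^×` is `q ^ ((β - ⌈β/p⌉) * d) - 1`, where `⌈β/p⌉ = (β + p - 1)/p`
is the ceiling of `β/p`. -/
theorem stmt5 {p t : ℕ} (hp : p.Prime) (ht : 0 < t)
    (Fq : Type*) [Field Fq] [Fintype Fq] (hq : Fintype.card Fq = p ^ t)
    (P : Polynomial Fq) (hPmonic : P.Monic) (hPirr : Irreducible P)
    (β : ℕ) (hβ : 2 ≤ β) :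
    Nat.card {x : (Polynomial Fq ⧸ Ideal.span {P ^ β})ˣ // orderOf x = p} =
      Fintype.card Fq ^ ((β - (β + p - 1) / p) * P.natDegree) - 1 := by
  classical
  haveI : Fact p.Prime := ⟨hp⟩
  have hp0 : 0 < p := hp.pos
  have hp2 : 2 ≤ p := hp.two_le
  set I : Ideal (Polynomial Fq) := Ideal.span {P ^ β} with hI
  set c : ℕ := (β + p - 1) / p with hc
  have harith : ∀ m : ℕ, c ≤ m ↔ β ≤ p * m := by
    intro m
    rw [hc, Nat.div_le_iff_le_mul_add_pred hp0]
    generalize p * m = X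
    omega
  have hβpc : β ≤ p * c := (harith c).mp le_rfl
  have hβcp : β ≤ c * p := by rw [mul_comm]; exact hβpc
  have hcβ : c ≤ β := (harith β).mpr (Nat.le_mul_of_pos_left β hp0)
  have hd : 0 < P.natDegree := hPirr.natDegree_pos
  have hPne : P ≠ 0 := hPmonic.ne_zero
  have hPprime : Prime P := hPirr.prime
  -- characteristic of Fq is p
  have hchar : CharP Fq p := by
    haveI := ringChar.charP Fq
    obtain ⟨n, hc0prime, hcard⟩ := FiniteField.card Fq (ringChar Fq)
    have hdvd : p ∣ ringChar Fq ^ (n : ℕ) := by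
      rw [← hcard, hq]
      exact dvd_pow_self p ht.ne'
    have : p = ringChar Fq :=
      (Nat.prime_dvd_prime_iff_eq hp hc0prime).mp (hp.dvd_of_dvd_pow hdvd)
    rw [this]
    exact ringChar.charP Fq
  haveI := hchar
  haveI : CharP (Polynomial Fq) p := by infer_instance
  haveI hcharR : CharP (Polynomial Fq ⧸ I) p := by
    refine CharP.quotient' p I ?_
    intro x hx
    rw [hI, Ideal.mem_span_singleton] at hx
    by_contra hne
    have h1 := Polynomial.natDegree_le_of_dvd hx hne
    rw [Polynomial.natDegree_natCast, Polynomial.natDegree_pow] at h1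
    have h2 : 0 < β * P.natDegree := by positivity
    omega
  -- key divisibility lemma
  have hkey : ∀ f : Polynomial Fq, P ^ β ∣ f ^ p → P ^ c ∣ f := by
    intro f hf
    rcases eq_or_ne f 0 with rfl | hf0
    · exact dvd_zero _
    have hfin := FiniteMultiplicity.of_prime_left hPprime hf0
    rw [pow_dvd_iff_le_emultiplicity, emultiplicity_pow hPprime,
      hfin.emultiplicity_eq_multiplicity] at hf
    rw [pow_dvd_iff_le_emultiplicity, hfin.emultiplicity_eq_multiplicity]
    have hβm : β ≤ p * multiplicity P f := by exact_mod_cast hf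
    exact_mod_cast (harith _).mpr hβm
  -- the ideal K and the map φ
  set K : Ideal (Polynomial Fq) := Ideal.span {P ^ (β - c)} with hK
  have hle : (K : Submodule (Polynomial Fq) (Polynomial Fq)) ≤ Submodule.comap (LinearMap.mulLeft (Polynomial Fq) (P ^ c)) I := by
    intro f hf
    rw [hK, Ideal.mem_span_singleton] at hf
    simp only [Submodule.mem_comap, LinearMap.mulLeft_apply]
    rw [hI]
    rw [Ideal.mem_span_singleton]
    have : P ^ c * P ^ (β - c) ∣ P ^ c * f := mul_dvd_mul_left _ hf
    rwa [← pow_add, Nat.add_sub_cancel' hcβ] at this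
  set φ : (Polynomial Fq ⧸ K) →ₗ[Polynomial Fq] (Polynomial Fq ⧸ I) := Submodule.mapQ K I (LinearMap.mulLeft (Polynomial Fq) (P ^ c)) hle with hφ
  have hφmk : ∀ f : Polynomial Fq, φ (Ideal.Quotient.mk K f) = Ideal.Quotient.mk I (P ^ c * f) := by
    intro f; rfl
  have hφ0 : ∀ g : Polynomial Fq ⧸ K, φ g = 0 → g = 0 := by
    intro g hg
    obtain ⟨f, rfl⟩ := Ideal.Quotient.mk_surjective g
    rw [hφmk] at hg
    rw [Ideal.Quotient.eq_zero_iff_mem, hI, Ideal.mem_span_singleton] at hg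
    rw [Ideal.Quotient.eq_zero_iff_mem, hK, Ideal.mem_span_singleton]
    have h2 : P ^ c * P ^ (β - c) ∣ P ^ c * f := by
      rw [← pow_add, Nat.add_sub_cancel' hcβ]; exact hg
    exact (mul_dvd_mul_iff_left (pow_ne_zero c hPne)).mp h2
  have hφinj : Function.Injective φ := by
    intro a b hab
    have h0 : φ (a - b) = 0 := by rw [map_sub, hab, sub_self]
    exact sub_eq_zero.mp (hφ0 _ h0)
  have hφpow : ∀ g : Polynomial Fq ⧸ K, (φ g) ^ p = 0 := by
    intro g
    obtain ⟨f, rfl⟩ := Ideal.Quotient.mk_surjective g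
    rw [hφmk, ← map_pow, Ideal.Quotient.eq_zero_iff_mem, hI, Ideal.mem_span_singleton,
      mul_pow, ← pow_mul]
    exact Dvd.dvd.mul_right (pow_dvd_pow P hβcp) _
  have hφsurj : ∀ z : Polynomial Fq ⧸ I, z ^ p = 0 → ∃ g, φ g = z := by
    intro z hz
    obtain ⟨f, rfl⟩ := Ideal.Quotient.mk_surjective z
    rw [← map_pow, Ideal.Quotient.eq_zero_iff_mem, hI, Ideal.mem_span_singleton] at hz
    obtain ⟨g, rfl⟩ := hkey f hz
    exact ⟨Ideal.Quotient.mk K g, hφmk g⟩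
  -- equivalence with nonzero elements of Polynomial Fq ⧸ K
  let e2fun : {g : Polynomial Fq ⧸ K // g ≠ 0} → {z : Polynomial Fq ⧸ I // z ≠ 0 ∧ z ^ p = 0} :=
    fun g => ⟨φ g.1, fun h0 => g.2 (hφ0 _ h0), hφpow g.1⟩
  have he2 : Function.Bijective e2fun := by
    constructor
    · intro a b hab
      have h1 : φ a.1 = φ b.1 := congrArg Subtype.val hab
      exact Subtype.ext (hφinj h1)
    · rintro ⟨z, hz0, hzp⟩
      obtain ⟨g, rfl⟩ := hφsurj z hzp
      exact ⟨⟨g, fun h => hz0 (by rw [h, map_zero])⟩, rfl⟩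
  -- equivalence with units of order p
  let e1fun : {z : Polynomial Fq ⧸ I // z ≠ 0 ∧ z ^ p = 0} → {x : (Polynomial Fq ⧸ I)ˣ // orderOf x = p} := fun z =>
    let hu := IsNilpotent.isUnit_one_add (⟨p, z.2.2⟩ : IsNilpotent z.1)
    ⟨hu.unit, by
      have hxp : hu.unit ^ p = 1 := by
        apply Units.ext
        rw [Units.val_pow_eq_pow_val, IsUnit.unit_spec, add_pow_char, one_pow, z.2.2,
          add_zero, Units.val_one]
      have hne1 : hu.unit ≠ 1 := by
        intro h
        apply z.2.1
        have h2 := congrArg Units.val h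
        rw [IsUnit.unit_spec, Units.val_one] at h2
        exact add_eq_left.mp h2
      exact orderOf_eq_prime hxp hne1⟩
  have he1 : Function.Bijective e1fun := by
    constructor
    · intro a b hab
      have h1 : ((e1fun a).1 : Polynomial Fq ⧸ I) = ((e1fun b).1 : Polynomial Fq ⧸ I) := by rw [hab]
      simp only [e1fun, IsUnit.unit_spec] at h1
      exact Subtype.ext (add_left_cancel h1)
    · rintro ⟨x, hx⟩
      have hx1 : x ≠ 1 := by
        intro h
        rw [h, orderOf_one] at hx
        omega
      have hxp : x ^ p = 1 := by rw [← hx]; exact pow_orderOf_eq_one x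
      refine ⟨⟨(x : Polynomial Fq ⧸ I) - 1, ?_, ?_⟩, ?_⟩
      · intro h
        apply hx1
        apply Units.ext
        rw [sub_eq_zero] at h
        simpa using h
      · rw [sub_pow_char, ← Units.val_pow_eq_pow_val, hxp, Units.val_one, one_pow, sub_self]
      · apply Subtype.ext
        apply Units.ext
        simp only [e1fun, IsUnit.unit_spec]
        ring
  have h1 : Nat.card {x : (Polynomial Fq ⧸ I)ˣ // orderOf x = p} = Nat.card {g : Polynomial Fq ⧸ K // g ≠ 0} := by
    rw [← Nat.card_congr (Equiv.ofBijective _ he1), ← Nat.card_congr (Equiv.ofBijective _ he2)]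
  -- cardinality of the quotient
  have hmon : (P ^ (β - c)).Monic := hPmonic.pow _
  let pb := AdjoinRoot.powerBasis' hmon
  haveI instF : Fintype (AdjoinRoot (P ^ (β - c))) := Module.fintypeOfFintype pb.basis
  have hQcard : Nat.card (AdjoinRoot (P ^ (β - c))) = Fintype.card Fq ^ ((β - c) * P.natDegree) := by
    rw [Nat.card_eq_fintype_card, Module.card_fintype pb.basis, Fintype.card_fin]
    show Fintype.card Fq ^ (P ^ (β - c)).natDegree = _
    rw [Polynomial.natDegree_pow]
  have hsub : Nat.card {g : Polynomial Fq ⧸ K // g ≠ 0} =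
      Nat.card (AdjoinRoot (P ^ (β - c))) - 1 := by
    exact aux_card_ne (0 : AdjoinRoot (P ^ (β - c)))
  rw [h1, hsub, hQcard]
end

section
/- Let q = p^t, P ∈ 𝔽_q[T] a monic irreducible polynomial of degree d, and β ≥ 2. The number of subgroups of order p of (𝔽_q[T]/(P^β))^× equals (q^{(β − ⌈β/p⌉)d} − 1)/(p − 1). -/
open Polynomial

lemma countP_aux {G : Type*} [CommGroup G] [Finite G] {p : ℕ} (hp : p.Prime) :
    Nat.card {H : Subgroup G // Nat.card H = p} * (p - 1) =
      Nat.card {x : G // x ^ p = 1} - 1 := by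
  classical
  cases nonempty_fintype G
  -- card of p-th roots of unity
  have h1 : Nat.card {x : G // x ^ p = 1} =
      Nat.card {x : G // orderOf x = p} + 1 := by
    have e : ∀ x : G, x ^ p = 1 ↔ (orderOf x = p ∨ x = 1) := by
      intro x
      rw [← orderOf_dvd_iff_pow_eq_one, Nat.dvd_prime hp, orderOf_eq_one_iff, or_comm]
    rw [Nat.card_congr (Equiv.subtypeEquivRight e), Nat.card_eq_fintype_card,
      Fintype.card_subtype_or_disjoint _ _ (by
        rintro q hq1 hq2 x hx
        have h1 := hq1 x hx
        have h2 := hq2 x hx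
        simp only at h1 h2
        subst h2
        rw [orderOf_one] at h1
        exact absurd h1.symm hp.ne_one)]
    rw [Fintype.card_subtype_eq, Nat.card_eq_fintype_card]
  -- fibration over subgroups
  set f : {x : G // orderOf x = p} → {H : Subgroup G // Nat.card H = p} :=
    fun x => ⟨Subgroup.zpowers x.1, by rw [Nat.card_zpowers, x.2]⟩ with hf
  have hfiber : ∀ H : {H : Subgroup G // Nat.card H = p},
      Nat.card {x : {x : G // orderOf x = p} // f x = H} = p - 1 := by
    intro H
    have key : ∀ x : {x : G // orderOf x = p}, f x = H ↔ (x.1 ∈ H.1 ∧ x.1 ≠ 1) := by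
      intro x
      constructor
      · intro h
        have hz : Subgroup.zpowers x.1 = H.1 := congrArg Subtype.val h
        constructor
        · rw [← hz]; exact Subgroup.mem_zpowers _
        · intro h1
          have hx2 := x.2
          rw [h1, orderOf_one] at hx2
          exact hp.ne_one hx2.symm
      · rintro ⟨hmem, -⟩
        have hle : Subgroup.zpowers x.1 ≤ H.1 := Subgroup.zpowers_le.2 hmem
        have : Subgroup.zpowers x.1 = H.1 :=
          Subgroup.eq_of_le_of_card_ge hle (by rw [Nat.card_zpowers, x.2, H.2])
        exact Subtype.ext this
    have e2 : {x : {x : G // orderOf x = p} // f x = H} ≃ {y : G // y ∈ H.1 ∧ y ≠ 1} :=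
      { toFun := fun x => ⟨x.1.1, (key x.1).1 x.2⟩
        invFun := fun y => by
          refine ⟨⟨y.1, ?_⟩, ?_⟩
          · have hdvd : orderOf y.1 ∣ Nat.card H.1 := by
              rw [← Subgroup.orderOf_mk y.1 y.2.1]
              exact orderOf_dvd_natCard (G := H.1) _
            rw [H.2] at hdvd
            rcases (Nat.dvd_prime hp).1 hdvd with h | h
            · exact absurd (orderOf_eq_one_iff.1 h) y.2.2
            · exact h
          · exact (key _).2 y.2
        left_inv := fun x => by ext; rfl
        right_inv := fun y => rfl }
    rw [Nat.card_congr e2]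
    have e3 : {y : G // y ∈ H.1 ∧ y ≠ 1} ≃ ((H.1 : Set G) \ {1} : Set G) :=
      Equiv.subtypeEquivRight (by intro y; simp [Set.mem_diff])
    rw [Nat.card_congr e3, Nat.card_coe_set_eq,
      Set.ncard_diff_singleton_of_mem H.1.one_mem, ← Nat.card_coe_set_eq,
      SetLike.coe_sort_coe, H.2]
  have e4 := Equiv.sigmaFiberEquiv f
  have h2 : Nat.card {x : G // orderOf x = p} =
      Nat.card {H : Subgroup G // Nat.card H = p} * (p - 1) := by
    rw [← Nat.card_congr e4]
    rw [Nat.card_eq_fintype_card, Fintype.card_sigma]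
    rw [Finset.sum_congr rfl (fun H _ => by
      rw [← Nat.card_eq_fintype_card, hfiber H])]
    simp [Finset.sum_const, mul_comm, Nat.card_eq_fintype_card]
  omega

noncomputable def quot_equiv_aux {Fq : Type*} [Field Fq] (f : Polynomial Fq) (hf : f ≠ 0) :
    (Polynomial Fq ⧸ Ideal.span {f}) ≃ (Fin f.natDegree → Fq) :=
  (Module.Basis.equivFun (AdjoinRoot.powerBasis hf).basis).toEquiv

lemma quot_card_aux {Fq : Type*} [Field Fq] [Fintype Fq] (f : Polynomial Fq) (hf : f ≠ 0) :
    Nat.card (Polynomial Fq ⧸ Ideal.span {f}) = Fintype.card Fq ^ f.natDegree := by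
  rw [Nat.card_congr (quot_equiv_aux f hf), Nat.card_eq_fintype_card,
    Fintype.card_fun, Fintype.card_fin]

/-- Let `q = p^t`, `P ∈ 𝔽_q[T]` a monic irreducible polynomial of
degree `d`, and `β ≥ 2`.  The number of subgroups of order `p` of the unit group
`(𝔽_q[T]/(P^β))^×` equals `(q ^ ((β - ⌈β/p⌉) * d) - 1) / (p - 1)`, where
`⌈β/p⌉ = (β + p - 1)/p` is the ceiling of `β/p`. -/
theorem stmt6 {p t : ℕ} (hp : p.Prime) (ht : 0 < t)
    (Fq : Type*) [Field Fq] [Fintype Fq] (hq : Fintype.card Fq = p ^ t)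
    (P : Polynomial Fq) (hPmonic : P.Monic) (hPirr : Irreducible P)
    (β : ℕ) (hβ : 2 ≤ β) :
    Nat.card {H : Subgroup (Polynomial Fq ⧸ Ideal.span {P ^ β})ˣ // Nat.card H = p} =
      (Fintype.card Fq ^ ((β - (β + p - 1) / p) * P.natDegree) - 1) / (p - 1) := by
  classical
  haveI : Fact p.Prime := ⟨hp⟩
  set R := Polynomial Fq ⧸ Ideal.span {P ^ β} with hR
  set c : ℕ := (β + p - 1) / p with hc
  have hp2 : 2 ≤ p := hp.two_le
  have hd : 0 < P.natDegree := hPirr.natDegree_pos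
  have hPprime : Prime P := hPirr.prime
  have hP0 : P ≠ 0 := hPprime.ne_zero
  have hPb0 : P ^ β ≠ 0 := pow_ne_zero _ hP0
  -- arithmetic facts about c
  have harith : ∀ m : ℕ, c ≤ m ↔ β ≤ p * m := by
    intro m
    rw [hc, Nat.div_le_iff_le_mul_add_pred hp.pos]
    obtain ⟨K, hK⟩ : ∃ K, p * m = K := ⟨_, rfl⟩
    rw [hK]
    omega
  have hcβ : c ≤ β := (harith β).2 (Nat.le_mul_of_pos_left β hp.pos)
  -- characteristic
  have hcharFq : CharP Fq p := by
    have h1 : CharP Fq (ringChar Fq) := ringChar.charP Fq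
    have h2 : (ringChar Fq).Prime := CharP.char_is_prime Fq _
    obtain ⟨n, hn⟩ := FiniteField.card Fq (ringChar Fq)
    have hdvd : p ∣ (ringChar Fq) ^ (n : ℕ) := by
      rw [← hn.2, hq]
      exact dvd_pow_self p (by omega)
    have : p = ringChar Fq :=
      (Nat.prime_dvd_prime_iff_eq hp h2).1 (hp.dvd_of_dvd_pow hdvd)
    exact this ▸ h1
  have hspan_ne_top : Ideal.span {P ^ β} ≠ ⊤ := by
    rw [Ne, Ideal.span_singleton_eq_top]
    intro hu
    have := Polynomial.natDegree_eq_zero_of_isUnit hu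
    rw [Polynomial.natDegree_pow] at this
    exact absurd this (Nat.mul_ne_zero (by omega) (by omega))
  haveI : Nontrivial R := Ideal.Quotient.nontrivial_iff.mpr hspan_ne_top
  haveI : CharP R p := charP_of_injective_algebraMap' Fq (A := R) p
  haveI : Finite R := Finite.of_equiv _ (quot_equiv_aux _ hPb0).symm
  -- key divisibility lemma
  have keydvd : ∀ f : Polynomial Fq, P ^ β ∣ f ^ p ↔ P ^ c ∣ f := by
    intro f
    rcases eq_or_ne f 0 with rfl | hf0
    · simp [zero_pow hp.ne_zero]
    have hfin : FiniteMultiplicity P f := FiniteMultiplicity.of_prime_left hPprime hf0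
    rw [pow_dvd_iff_le_emultiplicity, pow_dvd_iff_le_emultiplicity,
      emultiplicity_pow hPprime, hfin.emultiplicity_eq_multiplicity]
    rw [show ((p : ℕ∞) * (multiplicity P f : ℕ∞)) = ((p * multiplicity P f : ℕ) : ℕ∞) by
      push_cast; ring]
    rw [Nat.cast_le, Nat.cast_le]
    exact ((harith _).symm)
  -- the linear map ψ
  let π := Ideal.Quotient.mk (Ideal.span {P ^ β})
  let ψ : Polynomial Fq →ₗ[Polynomial Fq] R :=
    { toFun := fun g => π (P ^ c * g)
      map_add' := fun a b => by simp only [mul_add, map_add]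
      map_smul' := fun a g => by
        show π (P ^ c * (a * g)) = a • π (P ^ c * g)
        rw [mul_left_comm]
        exact Submodule.Quotient.mk_smul _ a _ }
  have hsplit : ∀ g : Polynomial Fq, P ^ β ∣ P ^ c * g ↔ P ^ (β - c) ∣ g := by
    intro g
    conv_lhs => rw [show β = c + (β - c) by omega]
    rw [pow_add, mul_dvd_mul_iff_left (pow_ne_zero c hP0)]
  have hker : LinearMap.ker ψ = Ideal.span {P ^ (β - c)} := by
    ext g
    simp only [LinearMap.mem_ker, LinearMap.coe_mk, AddHom.coe_mk,
      Ideal.mem_span_singleton, ψ]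
    rw [Ideal.Quotient.eq_zero_iff_mem, Ideal.mem_span_singleton]
    exact hsplit g
  have hrange : ∀ y : R, y ∈ LinearMap.range ψ ↔ y ^ p = 0 := by
    intro y
    obtain ⟨f, rfl⟩ := Ideal.Quotient.mk_surjective y
    constructor
    · rintro ⟨g, hg⟩
      rw [← hg]
      show (π (P ^ c * g)) ^ p = 0
      rw [← map_pow, Ideal.Quotient.eq_zero_iff_mem, Ideal.mem_span_singleton]
      exact (keydvd _).2 (dvd_mul_right _ _)
    · intro h
      rw [show Ideal.Quotient.mk (Ideal.span {P ^ β}) f = π f from rfl, ← map_pow,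
        Ideal.Quotient.eq_zero_iff_mem, Ideal.mem_span_singleton] at h
      obtain ⟨g, rfl⟩ := (keydvd f).1 h
      exact ⟨g, rfl⟩
  -- cardinality of p-torsion in R
  have hM : Nat.card {y : R // y ^ p = 0} =
      Fintype.card Fq ^ ((β - c) * P.natDegree) := by
    have e1 : {y : R // y ^ p = 0} ≃ LinearMap.range ψ :=
      Equiv.subtypeEquivRight fun y => (hrange y).symm
    have e2 := (LinearMap.quotKerEquivRange ψ).toEquiv
    rw [Nat.card_congr e1, ← Nat.card_congr e2, hker, quot_card_aux _ (pow_ne_zero _ hP0),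
      Polynomial.natDegree_pow]
  -- units with u^p = 1 correspond to y with y^p = 0
  have hpow1 : ∀ y : R, y ^ p = 0 → (1 + y) ^ p = 1 := by
    intro y hy
    rw [add_pow_char, one_pow, hy, add_zero]
  have eU : {u : Rˣ // u ^ p = 1} ≃ {y : R // y ^ p = 0} :=
    { toFun := fun u => ⟨(u.1 : R) - 1, by
        rw [sub_pow_char, one_pow, ← Units.val_pow_eq_pow_val, u.2, Units.val_one, sub_self]⟩
      invFun := fun y =>
        ⟨⟨1 + y.1, (1 + y.1) ^ (p - 1),
          by rw [← pow_succ' (1 + y.1) (p - 1), Nat.sub_add_cancel hp.one_le]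
             exact hpow1 y.1 y.2,
          by rw [← pow_succ (1 + y.1) (p - 1), Nat.sub_add_cancel hp.one_le]
             exact hpow1 y.1 y.2⟩,
         Units.ext (by
           simp only [Units.val_pow_eq_pow_val, Units.val_one]
           exact hpow1 y.1 y.2)⟩
      left_inv := fun u => Subtype.ext (Units.ext (by simp))
      right_inv := fun y => Subtype.ext (by simp) }
  -- final counting
  have hcount := countP_aux (G := Rˣ) hp
  rw [Nat.card_congr eU, hM] at hcount
  exact (Nat.div_eq_of_eq_mul_left (by omega) hcount.symm).symm
end

section
/- Let q = p^t, P ∈ 𝔽_q[T] monic irreducible of degree d, and β ≥ 1. An element 1 + h(T)·P mod P^β (with h ≠ 0) of (𝔽_q[T]/(P^β))^× has order p if and only if P^{⌈β/p⌉ − 1} divides h(T); in particular (1 + hP)^p = 1 + h^p P^p in 𝔽_q[T]. -/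
open Polynomial

/-- Let `q = p^t`, `P ∈ 𝔽_q[T]` monic irreducible of degree `d`,
`β ≥ 1`, and `h ∈ 𝔽_q[T]` with `h ≠ 0` and `deg h ≤ (β-1)d - 1`
(encoded as `deg h < (β-1)d`).  The element `1 + h·P mod P^β` of
`(𝔽_q[T]/(P^β))^×` has order `p` if and only if `P^{⌈β/p⌉ - 1}` divides `h`;
in particular `(1 + hP)^p = 1 + h^p P^p` in `𝔽_q[T]`.
Here `⌈β/p⌉ = (β + p - 1)/p`. -/
theorem stmt8 {p t : ℕ} (hp : p.Prime) (ht : 0 < t)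
    (Fq : Type*) [Field Fq] [Fintype Fq] (hq : Fintype.card Fq = p ^ t)
    (P : Polynomial Fq) (hPmonic : P.Monic) (hPirr : Irreducible P)
    (β : ℕ) (hβ : 1 ≤ β)
    (h : Polynomial Fq) (hh0 : h ≠ 0)
    (hdeg : h.degree < (((β - 1) * P.natDegree : ℕ) : WithBot ℕ)) :
    (orderOf (Ideal.Quotient.mk (Ideal.span {P ^ β}) (1 + h * P)) = p ↔
        P ^ ((β + p - 1) / p - 1) ∣ h) ∧
      (1 + h * P) ^ p = 1 + h ^ p * P ^ p := by
  haveI : Fact p.Prime := ⟨hp⟩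
  have hP0 : P ≠ 0 := hPmonic.ne_zero
  have hprime : Prime P := hPirr.prime
  have hd : 0 < P.natDegree := hPirr.natDegree_pos
  -- characteristic
  obtain ⟨c, hc⟩ := CharP.exists Fq
  haveI : CharP Fq c := hc
  obtain ⟨n, hcprime, hcard⟩ := FiniteField.card Fq c
  have hpc : p = c := by
    have h1 : p ∣ Fintype.card Fq := by
      rw [hq]; exact dvd_pow_self p ht.ne'
    rw [hcard] at h1
    exact (Nat.prime_dvd_prime_iff_eq hp hcprime).mp (hp.dvd_of_dvd_pow h1)
  subst hpc
  haveI : CharP (Polynomial Fq) p := by infer_instance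
  -- the second part
  have key : (1 + h * P) ^ p = 1 + h ^ p * P ^ p := by
    rw [add_pow_char, one_pow, mul_pow]
  refine ⟨?_, key⟩
  -- multiplicity setup
  have hfin : FiniteMultiplicity P h :=
    FiniteMultiplicity.of_not_isUnit hPirr.not_isUnit hh0
  set v := multiplicity P h with hv
  have hfin2 : FiniteMultiplicity P (h ^ p * P ^ p) :=
    FiniteMultiplicity.of_not_isUnit hPirr.not_isUnit
      (mul_ne_zero (pow_ne_zero _ hh0) (pow_ne_zero _ hP0))
  have hmul : multiplicity P (h ^ p * P ^ p) = p * v + p := by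
    rw [multiplicity_mul hprime hfin2, hfin.multiplicity_pow hprime,
      multiplicity_pow_self_of_prime hprime]
  -- x ≠ 1
  have hx_ne : Ideal.Quotient.mk (Ideal.span {P ^ β}) (1 + h * P) ≠ 1 := by
    intro hcon
    rw [show (1 : (Polynomial Fq) ⧸ (Ideal.span {P ^ β})) =
        Ideal.Quotient.mk (Ideal.span {P ^ β}) 1 from rfl, Ideal.Quotient.eq,
      add_sub_cancel_left, Ideal.mem_span_singleton] at hcon
    have hle := Polynomial.natDegree_le_of_dvd hcon (mul_ne_zero hh0 hP0)
    rw [Polynomial.natDegree_pow, Polynomial.natDegree_mul hh0 hP0] at hle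
    have hlt : h.natDegree < (β - 1) * P.natDegree :=
      (Polynomial.natDegree_lt_iff_degree_lt hh0).mpr hdeg
    have he : β * P.natDegree = (β - 1) * P.natDegree + P.natDegree := by
      conv_lhs => rw [← Nat.succ_pred_eq_of_pos hβ]
      rw [Nat.succ_mul, Nat.pred_eq_sub_one]
    omega
  -- x ^ p = 1 ↔ divisibility
  have hx_pow : Ideal.Quotient.mk (Ideal.span {P ^ β}) (1 + h * P) ^ p = 1 ↔
      P ^ β ∣ h ^ p * P ^ p := by
    rw [← map_pow, key, show (1 : (Polynomial Fq) ⧸ (Ideal.span {P ^ β})) =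
        Ideal.Quotient.mk (Ideal.span {P ^ β}) 1 from rfl, Ideal.Quotient.eq,
      add_sub_cancel_left, Ideal.mem_span_singleton]
  have hdvd_iff : P ^ β ∣ h ^ p * P ^ p ↔ β ≤ p * v + p := by
    rw [hfin2.pow_dvd_iff_le_multiplicity, hmul]
  -- arithmetic: β ≤ p*v + p ↔ (β+p-1)/p - 1 ≤ v
  have harith : β ≤ p * v + p ↔ (β + p - 1) / p - 1 ≤ v := by
    have hD1 : 1 ≤ (β + p - 1) / p := by
      rw [Nat.le_div_iff_mul_le hp.pos]; omega
    have hdle : (β + p - 1) / p ≤ v + 1 ↔ β + p - 1 ≤ p * (v + 1) + (p - 1) :=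
      Nat.div_le_iff_le_mul_add_pred hp.pos
    have hp2 := hp.two_le
    have hmv : p * (v + 1) = p * v + p := by ring
    omega
  -- conclude
  rw [hfin.pow_dvd_iff_le_multiplicity, ← harith, ← hdvd_iff, ← hx_pow]
  constructor
  · intro ho
    rw [← ho]
    exact pow_orderOf_eq_one _
  · intro h1
    exact orderOf_eq_prime h1 hx_ne
end

section
/- Let q = p^t and let 𝔽_{q^p}/𝔽_q be the degree-p extension of finite fields. Let F/K be a degree-p extension of K = 𝔽_q(T) with field of constants 𝔽_q, and ξ ∈ 𝔽_{q^p} \ 𝔽_q. If E, F are two distinct such degree-p Artin–Schreier extensions of K contained in a common field M with constant field 𝔽_q, then for any i, j ∈ {1,…,p−1} the fields E_j and F_i obtained by adjoining z + jξ and y + iξ (where E = K(z), F = K(y)) are distinct. -/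
set_option synthInstance.maxHeartbeats 1000000
open Polynomial IntermediateField


lemma auxCastPow {R : Type*} [CommRing R] {p : ℕ} (hp : p.Prime) [CharP R p] (k : ℕ) :
    (k : R) ^ p = (k : R) := by
  haveI : Fact p.Prime := ⟨hp⟩
  have h1 : ((k ^ p : ℕ) : ZMod p) = ((k : ℕ) : ZMod p) := by push_cast; exact ZMod.pow_card _
  have h2 : k ^ p ≡ k [MOD p] := (ZMod.natCast_eq_natCast_iff _ _ _).mp h1
  calc (k : R) ^ p = ((k ^ p : ℕ) : R) := by push_cast; ring
    _ = (k : R) := CharP.natCast_eq_natCast' R p h2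

lemma auxASmonic {K : Type*} [Field K] {p : ℕ} (hp : 1 < p) (c : K) :
    (X ^ p - X - C c : K[X]).Monic := by
  have h : (X ^ p - X - C c : K[X]) = X ^ p - (X + C c) := by ring
  rw [h]
  exact monic_X_pow_sub (by rw [degree_X_add_C]; exact_mod_cast hp)

lemma auxASnatDegree {K : Type*} [Field K] {p : ℕ} (hp : 1 < p) (c : K) :
    (X ^ p - X - C c : K[X]).natDegree = p := by
  have h : (X ^ p - X - C c : K[X]) = X ^ p - (X + C c) := by ring
  rw [h, natDegree_sub_eq_left_of_natDegree_lt, natDegree_X_pow]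
  rw [natDegree_X_pow]
  exact lt_of_le_of_lt ((natDegree_X_add_C c).le) hp

lemma auxPowEqSelf {Ω : Type*} [Field Ω] [DecidableEq Ω] {p : ℕ} (hp : p.Prime) [CharP Ω p]
    {x : Ω} (hx : x ^ p = x) : ∃ k : ℕ, k < p ∧ x = (k : Ω) := by
  set f : Polynomial Ω := X ^ p - X - C 0 with hf
  have hfm : f.Monic := auxASmonic hp.one_lt 0
  have hfd : f.natDegree = p := auxASnatDegree hp.one_lt 0
  set S : Finset Ω := (Finset.range p).image (Nat.cast) with hS
  have hScard : S.card = p := by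
    rw [hS, Finset.card_image_of_injOn, Finset.card_range]
    intro a ha b hb hab
    exact CharP.natCast_injOn_Iio Ω p (Finset.mem_range.mp ha) (Finset.mem_range.mp hb) hab
  have hroot : ∀ u : Ω, u ^ p = u → u ∈ f.roots := by
    intro u hu
    rw [mem_roots hfm.ne_zero]
    simp [hf, IsRoot, hu]
  have hsub : S ⊆ f.roots.toFinset := by
    intro s hs
    obtain ⟨k, hk, rfl⟩ := Finset.mem_image.mp hs
    exact Multiset.mem_toFinset.mpr (hroot _ (auxCastPow hp k))
  have hcard : f.roots.toFinset.card ≤ S.card := by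
    rw [hScard]
    exact le_trans (Multiset.toFinset_card_le _) (le_trans (card_roots' f) hfd.le)
  have heq : S = f.roots.toFinset := Finset.eq_of_subset_of_card_le hsub hcard
  have hx' : x ∈ S := heq ▸ Multiset.mem_toFinset.mpr (hroot x hx)
  obtain ⟨k, hk, hkx⟩ := Finset.mem_image.mp hx'
  exact ⟨k, Finset.mem_range.mp hk, hkx.symm⟩

lemma auxASdeg {K Ω : Type*} [Field K] [Field Ω] [Algebra K Ω] [IsAlgClosed Ω]
    {p : ℕ} (hp : p.Prime) [CharP K p] {w : Ω} {c : K}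
    (hw : w ^ p - w = algebraMap K Ω c)
    (hnot : ¬ ∃ a : K, w = algebraMap K Ω a) :
    (minpoly K w).natDegree = p := by
  classical
  haveI : Fact p.Prime := ⟨hp⟩
  haveI : CharP Ω p := charP_of_injective_algebraMap (algebraMap K Ω).injective p
  set f : Polynomial K := X ^ p - X - C c with hfdef
  have hfm : f.Monic := auxASmonic hp.one_lt c
  have hfd : f.natDegree = p := auxASnatDegree hp.one_lt c
  have hfw : aeval w f = 0 := by
    simp [hfdef, map_sub, map_pow, hw]
  have hint : IsIntegral K w := ⟨f, hfm, hfw⟩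
  set g : Polynomial K := minpoly K w with hgdef
  have hgm : g.Monic := minpoly.monic hint
  have hdvd : g ∣ f := minpoly.dvd K w hfw
  set d : ℕ := g.natDegree with hddef
  have hd1 : 0 < d := minpoly.natDegree_pos hint
  have hdp : d ≤ p := hfd ▸ natDegree_le_of_dvd hdvd hfm.ne_zero
  by_contra hne
  have hlt : d < p := lt_of_le_of_ne hdp hne
  -- the mapped minpoly over Ω
  set gm : Polynomial Ω := g.map (algebraMap K Ω) with hgmdef
  have hgmm : gm.Monic := hgm.map _
  have hgms : gm.Splits := IsAlgClosed.splits gm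
  have hcard : Multiset.card gm.roots = d := by
    rw [(splits_iff_card_roots).mp hgms, hgmdef, natDegree_map]
  have hsum : gm.roots.sum = -gm.nextCoeff :=
    by rw [hgms.nextCoeff_eq_neg_sum_roots_of_monic hgmm, neg_neg]
  -- every root of gm is w + (k : Ω)
  have hform : ∀ r ∈ gm.roots, ∃ k : ℕ, r = w + (k : Ω) := by
    intro r hr
    have hr0 : aeval r g = 0 := by
      have := (mem_roots hgmm.ne_zero).mp hr
      rwa [hgmdef, IsRoot, eval_map, ← aeval_def] at this
    have hrf : aeval r f = 0 := by
      obtain ⟨u, hu⟩ := hdvd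
      rw [hu, map_mul, hr0, zero_mul]
    have hrAS : r ^ p - r = algebraMap K Ω c := by
      have := hrf
      simp [hfdef, map_sub, map_pow] at this
      linear_combination this
    have hx : (r - w) ^ p = r - w := by
      rw [sub_pow_char]
      have h1 : r ^ p = r + algebraMap K Ω c := by linear_combination hrAS
      have h2 : w ^ p = w + algebraMap K Ω c := by linear_combination hw
      rw [h1, h2]; ring
    obtain ⟨k, _, hk⟩ := auxPowEqSelf hp hx
    exact ⟨k, by linear_combination hk⟩
  -- sum of roots
  have key : ∀ s : Multiset Ω, (∀ r ∈ s, ∃ k : ℕ, r = w + (k : Ω)) →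
      ∃ n : ℕ, s.sum = (Multiset.card s : Ω) * w + (n : Ω) := by
    intro s
    induction s using Multiset.induction with
    | empty => intro _; exact ⟨0, by simp⟩
    | cons a s ih =>
      intro h
      obtain ⟨k, hk⟩ := h a (Multiset.mem_cons_self a s)
      obtain ⟨n, hn⟩ := ih (fun r hr => h r (Multiset.mem_cons_of_mem hr))
      refine ⟨k + n, ?_⟩
      rw [Multiset.sum_cons, hn, hk, Multiset.card_cons]
      push_cast
      ring
  obtain ⟨n, hn⟩ := key gm.roots hform
  rw [hcard, hsum] at hn
  have hnc : gm.nextCoeff = algebraMap K Ω g.nextCoeff :=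
    nextCoeff_map (algebraMap K Ω).injective g
  have hpd : ¬ (p ∣ d) := Nat.not_dvd_of_pos_of_lt hd1 hlt
  have hdK : (d : K) ≠ 0 := fun h => hpd ((CharP.cast_eq_zero_iff K p d).mp h)
  have hdΩ : (d : Ω) ≠ 0 := fun h => hpd ((CharP.cast_eq_zero_iff Ω p d).mp h)
  apply hnot
  refine ⟨(d : K)⁻¹ * (-(g.nextCoeff) - (n : K)), ?_⟩
  have hmap : algebraMap K Ω ((d : K)⁻¹ * (-(g.nextCoeff) - (n : K))) =
      (d : Ω)⁻¹ * (-(algebraMap K Ω g.nextCoeff) - (n : Ω)) := by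
    rw [map_mul, map_inv₀, map_natCast, map_sub, map_neg, map_natCast]
  rw [hnc] at hn
  rw [hmap]
  field_simp
  linear_combination -hn


set_option maxHeartbeats 1000000 in
lemma auxMain {K Om : Type*} [Field K] [Field Om] [Algebra K Om] [IsAlgClosed Om]
    {p : ℕ} (hp : p.Prime) [CharP K p]
    (ξ z y : Om) (M E F : IntermediateField K Om)
    (hEM : E ≤ M) (hFM : F ≤ M)
    (hzE : E = IntermediateField.adjoin K {z})
    (hyF : F = IntermediateField.adjoin K {y})
    (a b : K) (ha : z ^ p - z = algebraMap K Om a) (hb : y ^ p - y = algebraMap K Om b)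
    (r : K) (hξ : ξ ^ p - ξ = algebraMap K Om r)
    (hEF : E ≠ F)
    {i j : ℕ} (hi1 : 1 ≤ i) (hiP : i < p) (hj1 : 1 ≤ j) (hjP : j < p)
    (heq : IntermediateField.adjoin K ({z + (j : Om) * ξ} : Set Om) =
      IntermediateField.adjoin K ({y + (i : Om) * ξ} : Set Om)) : ξ ∈ M := by
  classical
  haveI hFact : Fact p.Prime := ⟨hp⟩
  haveI hcharOm : CharP Om p := charP_of_injective_algebraMap (algebraMap K Om).injective p
  have hi0 : (i : Om) ≠ 0 := fun h =>
    Nat.not_dvd_of_pos_of_lt hi1 hiP ((CharP.cast_eq_zero_iff Om p i).mp h)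
  have hj0 : (j : Om) ≠ 0 := fun h =>
    Nat.not_dvd_of_pos_of_lt hj1 hjP ((CharP.cast_eq_zero_iff Om p j).mp h)
  set w1 : Om := z + (j : Om) * ξ with hw1def
  set w2 : Om := y + (i : Om) * ξ with hw2def
  set v : Om := (i : Om) * z - (j : Om) * y with hvdef
  have hcast : ∀ (L : IntermediateField K Om) (k : ℕ), (k : Om) ∈ L := by
    intro L k
    have h := map_natCast (algebraMap K Om) k
    exact h ▸ L.algebraMap_mem (k : K)
  have hw1mem : w1 ∈ IntermediateField.adjoin K {w1} := mem_adjoin_simple_self K w1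
  have hw2mem : w2 ∈ IntermediateField.adjoin K {w1} := heq ▸ mem_adjoin_simple_self K w2
  have hvmem : v ∈ IntermediateField.adjoin K {w1} := by
    have hveq : v = (i : Om) * w1 - (j : Om) * w2 := by rw [hw1def, hw2def, hvdef]; ring
    rw [hveq]
    exact sub_mem (mul_mem (hcast _ i) hw1mem) (mul_mem (hcast _ j) hw2mem)
  have hvAS : v ^ p - v = algebraMap K Om ((i : K) * a - (j : K) * b) := by
    have h1 : v ^ p = (i : Om) * z ^ p - (j : Om) * y ^ p := by
      rw [hvdef, sub_pow_char, mul_pow, mul_pow, auxCastPow hp i, auxCastPow hp j]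
    rw [h1, map_sub, map_mul, map_mul, map_natCast, map_natCast, hvdef]
    linear_combination (i : Om) * ha - (j : Om) * hb
  have hvnot : ¬ ∃ a0 : K, v = algebraMap K Om a0 := by
    rintro ⟨a0, ha0⟩
    apply hEF
    rw [hvdef] at ha0
    have hzy : z = (i : Om)⁻¹ * ((j : Om) * y + algebraMap K Om a0) := by
      field_simp
      linear_combination ha0
    have hyz : y = (j : Om)⁻¹ * ((i : Om) * z - algebraMap K Om a0) := by
      field_simp
      linear_combination -ha0
    have hzF : z ∈ F := by
      rw [hyF, hzy]
      exact mul_mem (inv_mem (hcast _ i))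
        (add_mem (mul_mem (hcast _ j) (mem_adjoin_simple_self K y))
          (IntermediateField.algebraMap_mem _ a0))
    have hyE : y ∈ E := by
      rw [hzE, hyz]
      exact mul_mem (inv_mem (hcast _ j))
        (sub_mem (mul_mem (hcast _ i) (mem_adjoin_simple_self K z))
          (IntermediateField.algebraMap_mem _ a0))
    apply le_antisymm
    · rw [hzE]
      exact adjoin_le_iff.mpr (Set.singleton_subset_iff.mpr hzF)
    · rw [hyF]
      exact adjoin_le_iff.mpr (Set.singleton_subset_iff.mpr hyE)
  have hvdeg : (minpoly K v).natDegree = p := auxASdeg hp hvAS hvnot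
  have hvint : IsIntegral K v :=
    ⟨X ^ p - X - C ((i : K) * a - (j : K) * b), auxASmonic hp.one_lt _, by
      rw [eval₂_sub, eval₂_sub, eval₂_X_pow, eval₂_X, eval₂_C, ← hvAS]; ring⟩
  haveI : FiniteDimensional K (IntermediateField.adjoin K {v} : IntermediateField K Om) :=
    adjoin.finiteDimensional hvint
  have hvfin : Module.finrank K (IntermediateField.adjoin K {v} : IntermediateField K Om) = p :=
    (adjoin.finrank hvint).trans hvdeg
  have hw1AS : w1 ^ p - w1 = algebraMap K Om (a + (j : K) * r) := by
    have h1 : w1 ^ p = z ^ p + (j : Om) * ξ ^ p := by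
      rw [hw1def, add_pow_char, mul_pow, auxCastPow hp j]
    rw [h1, map_add, map_mul, map_natCast, hw1def]
    linear_combination ha + (j : Om) * hξ
  have hw1int : IsIntegral K w1 :=
    ⟨X ^ p - X - C (a + (j : K) * r), auxASmonic hp.one_lt _, by
      rw [eval₂_sub, eval₂_sub, eval₂_X_pow, eval₂_X, eval₂_C, ← hw1AS]; ring⟩
  haveI : FiniteDimensional K (IntermediateField.adjoin K {w1} : IntermediateField K Om) :=
    adjoin.finiteDimensional hw1int
  have hw1fin : Module.finrank K
      (IntermediateField.adjoin K {w1} : IntermediateField K Om) ≤ p := by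
    rw [adjoin.finrank hw1int]
    have hdvd := minpoly.dvd K w1 (show (aeval w1) (X ^ p - X - C (a + (j : K) * r)) = 0 by
      rw [map_sub, map_sub, aeval_X_pow, aeval_X, aeval_C, ← hw1AS]; ring)
    have hle := natDegree_le_of_dvd hdvd (auxASmonic hp.one_lt (a + (j : K) * r)).ne_zero
    rwa [auxASnatDegree hp.one_lt] at hle
  have hsub : IntermediateField.adjoin K {v} ≤ IntermediateField.adjoin K {w1} :=
    adjoin_le_iff.mpr (Set.singleton_subset_iff.mpr hvmem)
  have heqL : IntermediateField.adjoin K {v} = IntermediateField.adjoin K {w1} :=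
    IntermediateField.eq_of_le_of_finrank_le hsub (hvfin ▸ hw1fin)
  have hzM : z ∈ M := hEM (hzE ▸ mem_adjoin_simple_self K z)
  have hyM : y ∈ M := hFM (hyF ▸ mem_adjoin_simple_self K y)
  have hvM : v ∈ M := by
    rw [hvdef]
    exact sub_mem (mul_mem (hcast _ i) hzM) (mul_mem (hcast _ j) hyM)
  have hw1M : w1 ∈ M := by
    have hKvM : IntermediateField.adjoin K {v} ≤ M :=
      adjoin_le_iff.mpr (Set.singleton_subset_iff.mpr hvM)
    exact hKvM (heqL ▸ hw1mem)
  have hjξM : (j : Om) * ξ ∈ M := by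
    have h5 : (j : Om) * ξ = w1 - z := by rw [hw1def]; ring
    rw [h5]; exact sub_mem hw1M hzM
  have h6 : ξ = (j : Om)⁻¹ * ((j : Om) * ξ) := by field_simp
  rw [h6]; exact mul_mem (inv_mem (hcast _ j)) hjξM


/-- Let `q = p^t` and let `ξ` be an Artin–Schreier generator of
`𝔽_{q^p}` over `𝔽_q` (so `ξ^p - ξ = ρ` with `ρ ∈ 𝔽_q \ ℘(𝔽_q)`), viewed inside a
fixed algebraic closure `Ω` of `K = 𝔽_q(T)`.  Let `E = K(z)` and `F = K(y)` be two
distinct degree-`p` Artin–Schreier extensions of `K`, each with exact constant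
field `𝔽_q`, both contained in a field `M` whose constant field is `𝔽_q`.  Then
for any `i, j ∈ {1, …, p-1}` the fields `E_j = K(z + jξ)` and `F_i = K(y + iξ)`
are distinct.  (The constant field of an intermediate field being `𝔽_q` is
expressed as: every element of it that is integral over `𝔽_q` lies in `𝔽_q`.) -/
theorem stmt17 {p t : ℕ} (hp : p.Prime) (ht : 0 < t)
    (Fq : Type*) [Field Fq] [Fintype Fq] (hq : Fintype.card Fq = p ^ t)
    (ρ : Fq) (hρ : ∀ c : Fq, c ^ p - c ≠ ρ)
    (ξ : AlgebraicClosure (RatFunc Fq))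
    (hξ : ξ ^ p - ξ = algebraMap Fq (AlgebraicClosure (RatFunc Fq)) ρ)
    (M E F : IntermediateField (RatFunc Fq) (AlgebraicClosure (RatFunc Fq)))
    (hEM : E ≤ M) (hFM : F ≤ M)
    (hMconst : ∀ x : AlgebraicClosure (RatFunc Fq), x ∈ M → IsIntegral Fq x →
      ∃ c : Fq, x = algebraMap Fq (AlgebraicClosure (RatFunc Fq)) c)
    (hEconst : ∀ x : AlgebraicClosure (RatFunc Fq), x ∈ E → IsIntegral Fq x →
      ∃ c : Fq, x = algebraMap Fq (AlgebraicClosure (RatFunc Fq)) c)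
    (hFconst : ∀ x : AlgebraicClosure (RatFunc Fq), x ∈ F → IsIntegral Fq x →
      ∃ c : Fq, x = algebraMap Fq (AlgebraicClosure (RatFunc Fq)) c)
    (z y : AlgebraicClosure (RatFunc Fq))
    (hzE : E = IntermediateField.adjoin (RatFunc Fq) {z})
    (hyF : F = IntermediateField.adjoin (RatFunc Fq) {y})
    (hzAS : ∃ a : RatFunc Fq,
      z ^ p - z = algebraMap (RatFunc Fq) (AlgebraicClosure (RatFunc Fq)) a)
    (hyAS : ∃ a : RatFunc Fq,
      y ^ p - y = algebraMap (RatFunc Fq) (AlgebraicClosure (RatFunc Fq)) a)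
    (hEdeg : Module.finrank (RatFunc Fq) E = p)
    (hFdeg : Module.finrank (RatFunc Fq) F = p)
    (hEF : E ≠ F) :
    ∀ i j : ℕ, 1 ≤ i → i ≤ p - 1 → 1 ≤ j → j ≤ p - 1 →
      IntermediateField.adjoin (RatFunc Fq)
          ({z + (j : AlgebraicClosure (RatFunc Fq)) * ξ} :
            Set (AlgebraicClosure (RatFunc Fq))) ≠
        IntermediateField.adjoin (RatFunc Fq)
          ({y + (i : AlgebraicClosure (RatFunc Fq)) * ξ} :
            Set (AlgebraicClosure (RatFunc Fq))) := by
  classical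
  intro i j hi1 hip1 hj1 hjp1 heq
  haveI hFact : Fact p.Prime := ⟨hp⟩
  haveI hcharFq : CharP Fq p := by
    obtain ⟨n, hrp, hcard⟩ := FiniteField.card Fq (ringChar Fq)
    have h1 : p ∣ ringChar Fq ^ (n : ℕ) := by
      rw [← hcard, hq]; exact dvd_pow_self p ht.ne'
    have h2 : p = ringChar Fq :=
      (Nat.prime_dvd_prime_iff_eq hp hrp).mp (hp.dvd_of_dvd_pow h1)
    exact h2 ▸ ringChar.charP Fq
  haveI hcharK : CharP (RatFunc Fq) p :=
    charP_of_injective_algebraMap (algebraMap Fq (RatFunc Fq)).injective p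
  have hiP : i < p := by have := hp.pos; omega
  have hjP : j < p := by have := hp.pos; omega
  obtain ⟨a, ha⟩ := hzAS
  obtain ⟨b, hb⟩ := hyAS
  have htower : algebraMap Fq (AlgebraicClosure (RatFunc Fq)) ρ =
      algebraMap (RatFunc Fq) (AlgebraicClosure (RatFunc Fq)) (algebraMap Fq (RatFunc Fq) ρ) :=
    IsScalarTower.algebraMap_apply Fq (RatFunc Fq) (AlgebraicClosure (RatFunc Fq)) ρ
  have hξ' : ξ ^ p - ξ = algebraMap (RatFunc Fq) (AlgebraicClosure (RatFunc Fq))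
      (algebraMap Fq (RatFunc Fq) ρ) := by rw [← htower]; exact hξ
  have hξM : ξ ∈ M := auxMain hp ξ z y M E F hEM hFM hzE hyF a b ha hb
    (algebraMap Fq (RatFunc Fq) ρ) hξ' hEF hi1 hiP hj1 hjP heq
  have hξint : IsIntegral Fq ξ :=
    ⟨X ^ p - X - C ρ, auxASmonic hp.one_lt ρ, by
      rw [eval₂_sub, eval₂_sub, eval₂_X_pow, eval₂_X, eval₂_C, ← hξ]; ring⟩
  obtain ⟨c, hc⟩ := hMconst ξ hξM hξint
  apply hρ c
  apply (algebraMap Fq (AlgebraicClosure (RatFunc Fq))).injective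
  rw [map_sub, map_pow, ← hc]
  exact hξ
end
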